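/- Let a_1, …, a_m ∈ ℝ^d be pairwise linearly independent with ‖a_i‖_∞ = 1 and Σ_i a_i = 0, and define Γ with first-layer rows a_1, …, a_m, −a_1, …, −a_m and output weights (1,…,1,−1,…,−1); then R(Γ) = 0. Let v ∈ ℝ^d with ‖v‖_∞ = 1 be linearly independent to each a_i, and g_k(x) = (1/k)·ReLU(⟨v, x⟩). Then there exists a constant C > 0 (independent of k) such that for every k and every parametrization Φ_k with architecture (d, 2m, 1) realizing g_k, we have |g_k − R(Γ)|_{W^{1,∞}} = 1/k while ‖Φ_k − Γ‖_∞ ≥ C; one may take C² = (1/d²)·min_i (‖a_i‖₂²‖v‖₂² − ⟨a_i, v⟩²). -/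

import Mathlib

open MeasureTheory

/-- The Sobolev `W^{1,∞}` seminorm: essential supremum of the max-norm of the
(a.e.) gradient. -/
noncomputable def sobSemi (d : ℕ) (f : (Fin d → ℝ) → ℝ) : ℝ :=
  essSup (fun x => ⨆ j : Fin d, |fderiv ℝ f x (Pi.single j 1)|) volume

noncomputable def dotL (d : ℕ) (u : Fin d → ℝ) : (Fin d → ℝ) →ₗ[ℝ] ℝ :=
  ∑ l, u l • LinearMap.proj l

lemma dotL_apply (d : ℕ) (u x : Fin d → ℝ) : dotL d u x = ∑ l, u l * x l := by
  simp [dotL]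

/-- Finitely many nonzero functionals have a common non-vanishing point. -/
lemma exists_forall_ne_zero {V : Type*} [AddCommGroup V] [Module ℝ V] {ι : Type*}
    (s : Finset ι) (φ : ι → V →ₗ[ℝ] ℝ) (h : ∀ i ∈ s, ∃ y, φ i y ≠ 0) :
    ∃ x : V, ∀ i ∈ s, φ i x ≠ 0 := by
  classical
  induction s using Finset.cons_induction with
  | empty => exact ⟨0, by simp⟩
  | cons a s ha ih =>
    obtain ⟨x, hx⟩ := ih (fun i hi => h i (Finset.mem_cons_of_mem hi))
    obtain ⟨y, hy⟩ := h a (Finset.mem_cons_self a s)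
    set T : Finset ℝ := insert (-(φ a x) / φ a y) (s.image fun i => -(φ i x) / φ i y)
    obtain ⟨t, ht⟩ := Infinite.exists_notMem_finset T
    refine ⟨x + t • y, ?_⟩
    intro i hi
    rw [Finset.mem_cons] at hi
    intro hzero
    rw [map_add, _root_.map_smul, smul_eq_mul] at hzero
    rcases hi with rfl | hi
    · have : t = -(φ i x) / φ i y := by field_simp at hzero ⊢; linarith
      exact ht (this ▸ Finset.mem_insert_self _ _)
    · by_cases hφy : φ i y = 0
      · rw [hφy, mul_zero, add_zero] at hzero
        exact hx i hi hzero
      · have : t = -(φ i x) / φ i y := by field_simp; linarith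
        refine ht (this ▸ Finset.mem_insert_of_mem ?_)
        exact Finset.mem_image_of_mem _ hi

/-- If `b` vanishes on the kernel of `v`'s functional, then `b` is a multiple of `v`. -/

lemma sum_pos_self (d : ℕ) (v : Fin d → ℝ) (hv : v ≠ 0) : (0:ℝ) < ∑ l, v l * v l := by
  rcases Function.ne_iff.mp hv with ⟨l0, hl0⟩
  have h2 : (0:ℝ) < ∑ l, v l ^ 2 := by
    apply Finset.sum_pos' (fun l _ => sq_nonneg _)
    exact ⟨l0, Finset.mem_univ _,
      lt_of_le_of_ne (sq_nonneg _) (Ne.symm (pow_ne_zero 2 hl0))⟩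
  simpa [sq] using h2

/-- If `b` vanishes on the kernel of `v`'s functional, then `b` is a multiple of `v`. -/
lemma eq_smul_of_ker (d : ℕ) (v b : Fin d → ℝ) (hv : v ≠ 0)
    (h : ∀ y : Fin d → ℝ, (∑ l, v l * y l) = 0 → (∑ l, b l * y l) = 0) :
    ∃ μ : ℝ, b = μ • v := by
  have hV : (0:ℝ) < ∑ l, v l * v l := sum_pos_self d v hv
  set V : ℝ := ∑ l, v l * v l with hVdef
  set u : Fin d → ℝ := (1 / V) • v with hu
  have hvu : (∑ l, v l * u l) = 1 := by
    have : (∑ l, v l * u l) = (1/V) * ∑ l, v l * v l := by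
      rw [Finset.mul_sum]
      exact Finset.sum_congr rfl fun l _ => by simp [hu]; ring
    rw [this, ← hVdef]; field_simp
  refine ⟨∑ l, b l * u l, ?_⟩
  funext l0
  have hsingle : ∀ w : Fin d → ℝ, (∑ l, w l * (Pi.single l0 1 : Fin d → ℝ) l) = w l0 := by
    intro w
    rw [Finset.sum_eq_single l0]
    · simp
    · intro l _ hne; simp [Pi.single_apply, hne]
    · simp
  have key := h (fun l => (Pi.single l0 1 : Fin d → ℝ) l - v l0 * u l) ?_
  · simp only [mul_sub, Finset.sum_sub_distrib, hsingle] at key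
    have h2 : (∑ l, b l * (v l0 * u l)) = v l0 * ∑ l, b l * u l := by
      rw [Finset.mul_sum]; exact Finset.sum_congr rfl fun l _ => by ring
    rw [h2] at key
    have : b l0 = v l0 * ∑ l, b l * u l := by linarith
    rw [this]; simp [mul_comm]
  · simp only [mul_sub, Finset.sum_sub_distrib, hsingle]
    have h2 : (∑ l, v l * (v l0 * u l)) = v l0 * ∑ l, v l * u l := by
      rw [Finset.mul_sum]; exact Finset.sum_congr rfl fun l _ => by ring
    rw [h2, hvu, mul_one, sub_self]

/-- Any ReLU-network realization of `α·ReLU(⟨v,·⟩)` (α ≠ 0) has a first-layer row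
that is a multiple of `v`. -/
lemma exists_row_parallel {ι : Type*} [Fintype ι] [Nonempty ι] (d : ℕ)
    (v : Fin d → ℝ) (hv : v ≠ 0) (b : ι → Fin d → ℝ) (cc : ι → ℝ) (α : ℝ) (hα : α ≠ 0)
    (hreal : ∀ x : Fin d → ℝ,
      ∑ i, cc i * max (∑ l, b i l * x l) 0 = α * max (∑ l, v l * x l) 0) :
    ∃ i : ι, ∃ μ : ℝ, b i = μ • v := by
  classical
  by_contra hcon
  push_neg at hcon
  -- each b i does not vanish on ker v
  have step1 : ∀ i : ι, ∃ y : Fin d → ℝ, (∑ l, v l * y l) = 0 ∧ (∑ l, b i l * y l) ≠ 0 := by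
    intro i
    by_contra hno
    push_neg at hno
    obtain ⟨μ, hμ⟩ := eq_smul_of_ker d v (b i) hv (fun y hy => hno y hy)
    exact hcon i μ hμ
  -- a positive multiple of v with ⟨v,u⟩ = 1
  have hV : (0:ℝ) < ∑ l, v l * v l := sum_pos_self d v hv
  set u : Fin d → ℝ := (1 / (∑ l, v l * v l)) • v with hu
  have hvu : (∑ l, v l * u l) = 1 := by
    have : (∑ l, v l * u l) = (1 / (∑ l, v l * v l)) * ∑ l, v l * v l := by
      rw [Finset.mul_sum]
      exact Finset.sum_congr rfl fun l _ => by simp [hu]; ring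
    rw [this]; exact one_div_mul_cancel hV.ne'
  -- a point x₀ on ker v avoiding all the b i hyperplanes
  set P : (Fin d → ℝ) →ₗ[ℝ] (Fin d → ℝ) :=
    LinearMap.id - (dotL d v).smulRight u with hP
  have hPapply : ∀ x : Fin d → ℝ, P x = x - (∑ l, v l * x l) • u := by
    intro x; simp [hP, dotL_apply]
  obtain ⟨x, hx⟩ := exists_forall_ne_zero Finset.univ
    (fun i => (dotL d (b i)).comp P) (by
      intro i _
      obtain ⟨y, hy1, hy2⟩ := step1 i
      refine ⟨y, ?_⟩
      simp only [LinearMap.comp_apply, hPapply, hy1, zero_smul, sub_zero, dotL_apply]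
      exact hy2)
  set x₀ : Fin d → ℝ := P x with hx₀
  have hvx₀ : (∑ l, v l * x₀ l) = 0 := by
    simp only [hx₀, hPapply, Pi.sub_apply, Pi.smul_apply, smul_eq_mul]
    rw [show (∑ l, v l * (x l - (∑ l', v l' * x l') * u l))
        = (∑ l, v l * x l) - (∑ l', v l' * x l') * (∑ l, v l * u l) from by
      rw [Finset.mul_sum]
      rw [← Finset.sum_sub_distrib]
      exact Finset.sum_congr rfl fun l _ => by ring]
    rw [hvu]; ring
  have hbx₀ : ∀ i : ι, (∑ l, b i l * x₀ l) ≠ 0 := by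
    intro i
    have := hx i (Finset.mem_univ i)
    simpa [dotL_apply, hx₀] using this
  -- the line argument
  set c : ι → ℝ := fun i => ∑ l, b i l * x₀ l with hc
  set e : ι → ℝ := fun i => ∑ l, b i l * u l with he
  set δ : ℝ := Finset.univ.inf' Finset.univ_nonempty (fun i => |c i| / (|e i| + 1)) with hδ
  have hδpos : 0 < δ := by
    rw [hδ, Finset.lt_inf'_iff]
    intro i _
    have h1 : 0 < |c i| := abs_pos.mpr (hbx₀ i)
    have h2 : 0 < |e i| + 1 := by positivity
    positivity
  have hline : ∀ t : ℝ, |t| < δ →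
      (∑ i, cc i * (if 0 < c i then c i + t * e i else 0)) = α * max t 0 := by
    intro t ht
    have hte : ∀ i : ι, |t * e i| < |c i| := by
      intro i
      have h1 : δ ≤ |c i| / (|e i| + 1) := by
        rw [hδ]; exact Finset.inf'_le _ (Finset.mem_univ i)
      have h2 : (0:ℝ) < |e i| + 1 := by positivity
      calc |t * e i| = |t| * |e i| := abs_mul t (e i)
        _ ≤ |t| * (|e i| + 1) := by nlinarith [abs_nonneg t]
        _ < (|c i| / (|e i| + 1)) * (|e i| + 1) := by
            apply mul_lt_mul_of_pos_right _ h2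
            exact lt_of_lt_of_le ht h1
        _ = |c i| := by field_simp
    have := hreal (fun l => x₀ l + t * u l)
    rw [show (∑ l, v l * (x₀ l + t * u l)) = t from by
      rw [show (∑ l, v l * (x₀ l + t * u l))
          = (∑ l, v l * x₀ l) + t * (∑ l, v l * u l) from by
        rw [Finset.mul_sum, ← Finset.sum_add_distrib]
        exact Finset.sum_congr rfl fun l _ => by ring]
      rw [hvx₀, hvu]; ring] at this
    rw [← this]
    apply Finset.sum_congr rfl
    intro i _
    congr 1
    have hexp : (∑ l, b i l * (x₀ l + t * u l)) = c i + t * e i := by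
      rw [hc, he]
      simp only
      rw [Finset.mul_sum, ← Finset.sum_add_distrib]
      exact Finset.sum_congr rfl fun l _ => by ring
    rw [hexp]
    by_cases hci : 0 < c i
    · rw [if_pos hci]
      refine (max_eq_left ?_).symm
      have := hte i
      have : -(c i) < t * e i := by
        have h := (abs_lt.mp (hte i)).1
        have : |c i| = c i := abs_of_pos hci
        linarith [(abs_lt.mp (hte i)).1, this ▸ (abs_lt.mp (hte i)).1]
      linarith
    · rw [if_neg hci]
      refine (max_eq_right ?_).symm
      have hci' : c i < 0 := lt_of_le_of_ne (not_lt.mp hci) (hbx₀ i)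
      have habs : |c i| = -(c i) := abs_of_neg hci'
      have := (abs_lt.mp (hte i)).2
      rw [habs] at this
      linarith
  -- extract affine structure and derive contradiction
  set A : ℝ := ∑ i, (if 0 < c i then cc i * c i else 0) with hA
  set B : ℝ := ∑ i, (if 0 < c i then cc i * e i else 0) with hB
  have haff : ∀ t : ℝ, |t| < δ → A + t * B = α * max t 0 := by
    intro t ht
    rw [← hline t ht, hA, hB, Finset.mul_sum, ← Finset.sum_add_distrib]
    apply Finset.sum_congr rfl
    intro i _
    by_cases hci : 0 < c i <;> simp [hci] <;> ring
  have h1 := haff (-(δ/2)) (by rw [abs_of_nonpos (by linarith)]; linarith)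
  have h2 := haff (-(δ/4)) (by rw [abs_of_nonpos (by linarith)]; linarith)
  have h3 := haff (δ/2) (by rw [abs_of_pos (by linarith)]; linarith)
  rw [max_eq_right (by linarith)] at h1 h2
  rw [max_eq_left (by linarith)] at h3
  have hB0 : B = 0 := by
    have : -(δ/2) * B - (-(δ/4) * B) = 0 := by linarith
    have hδ4 : -(δ/4) * B = 0 := by linarith
    rcases mul_eq_zero.mp hδ4 with h | h
    · linarith
    · exact h
  have hA0 : A = 0 := by rw [hB0] at h1; linarith
  rw [hA0, hB0] at h3
  have : α * (δ/2) = 0 := by linarith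
  rcases mul_eq_zero.mp this with h | h
  · exact hα h
  · linarith

set_option maxHeartbeats 2000000 in
lemma sobSemi_relu (d : ℕ) (hd : 0 < d) (v : Fin d → ℝ) (hvnorm : ‖v‖ = 1)
    (α : ℝ) (hα : 0 < α) :
    sobSemi d (fun x => α * max (∑ l, v l * x l) 0) = α := by
  haveI : Nonempty (Fin d) := ⟨⟨0, hd⟩⟩
  have hv : v ≠ 0 := by intro h; rw [h, norm_zero] at hvnorm; norm_num at hvnorm
  -- the continuous linear functional
  set Lc : (Fin d → ℝ) →L[ℝ] ℝ := ∑ l, v l • ContinuousLinearMap.proj l with hLc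
  have hLcapp : ∀ x : Fin d → ℝ, Lc x = ∑ l, v l * x l := by
    intro x; simp [hLc]
  have hLcsingle : ∀ j : Fin d, Lc (Pi.single j 1) = v j := by
    intro j
    rw [hLcapp]
    rw [Finset.sum_eq_single j]
    · simp
    · intro l _ hne; simp [Pi.single_apply, hne]
    · simp
  set g : (Fin d → ℝ) → ℝ := fun x => α * max (∑ l, v l * x l) 0 with hg
  set F : (Fin d → ℝ) → ℝ := fun x => ⨆ j : Fin d, |fderiv ℝ g x (Pi.single j 1)| with hF
  -- sup of |v j| is 1
  have hbdd : ∀ w : Fin d → ℝ, BddAbove (Set.range fun j => |w j|) :=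
    fun w => (Set.finite_range _).bddAbove
  have hsupv : (⨆ j, |v j|) = 1 := by
    apply le_antisymm
    · apply ciSup_le
      intro j
      have := norm_le_pi_norm v j
      rwa [hvnorm] at this
    · rw [← hvnorm]
      apply (pi_norm_le_iff_of_nonneg ?_).mpr
      · intro j
        exact le_ciSup (hbdd v) j
      · exact le_trans (abs_nonneg (v ⟨0, hd⟩)) (le_ciSup (hbdd v) ⟨0, hd⟩)
  -- positive region
  have hopen : IsOpen {y : Fin d → ℝ | 0 < Lc y} := isOpen_lt continuous_const Lc.continuous
  have hFpos : ∀ x : Fin d → ℝ, 0 < Lc x → F x = α := by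
    intro x hx
    have hder : fderiv ℝ g x = α • Lc := by
      have hev : g =ᶠ[nhds x] fun y => (α • Lc) y := by
        apply Set.EqOn.eventuallyEq_of_mem (s := {y : Fin d → ℝ | 0 < Lc y})
        · intro y hy
          simp only [hg, ContinuousLinearMap.smul_apply, smul_eq_mul]
          rw [← hLcapp, max_eq_left (le_of_lt hy)]
        · exact hopen.mem_nhds hx
      rw [hev.fderiv_eq]
      exact (α • Lc).fderiv
    rw [hF]
    simp only [hder, ContinuousLinearMap.smul_apply, smul_eq_mul, hLcsingle]
    rw [show (fun j : Fin d => |α * v j|) = fun j => α * |v j| from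
      funext fun j => by rw [abs_mul, abs_of_pos hα]]
    rw [← Real.mul_iSup_of_nonneg hα.le, hsupv, mul_one]
  have hFneg : ∀ x : Fin d → ℝ, Lc x < 0 → F x = 0 := by
    intro x hx
    have hder : fderiv ℝ g x = 0 := by
      have hev : g =ᶠ[nhds x] fun _ => (0 : ℝ) := by
        apply Set.EqOn.eventuallyEq_of_mem (s := {y : Fin d → ℝ | Lc y < 0})
        · intro y hy
          simp only [hg]
          rw [← hLcapp, max_eq_right (le_of_lt hy), mul_zero]
        · exact (isOpen_lt Lc.continuous continuous_const).mem_nhds hx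
      rw [hev.fderiv_eq]
      exact fderiv_const_apply 0
    rw [hF]
    simp [hder]
  -- hyperplane is null
  have hker : volume {x : Fin d → ℝ | Lc x = 0} = 0 := by
    have heq : {x : Fin d → ℝ | Lc x = 0} = (LinearMap.ker (dotL d v) : Set (Fin d → ℝ)) := by
      ext x
      simp [LinearMap.mem_ker, dotL_apply, hLcapp]
    rw [heq]
    apply Measure.addHaar_submodule
    intro htop
    have : dotL d v v = 0 := by
      have : v ∈ LinearMap.ker (dotL d v) := htop ▸ Submodule.mem_top
      exact this
    rw [dotL_apply] at this
    have hvv : (0:ℝ) < ∑ l, v l * v l := by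
      rcases Function.ne_iff.mp hv with ⟨l0, hl0⟩
      have h2 : (0:ℝ) < ∑ l, v l ^ 2 :=
        Finset.sum_pos' (fun l _ => sq_nonneg _)
          ⟨l0, Finset.mem_univ _, lt_of_le_of_ne (sq_nonneg _) (Ne.symm (pow_ne_zero 2 hl0))⟩
      simpa [sq] using h2
    linarith
  have hae : F ≤ᶠ[ae (volume : Measure (Fin d → ℝ))] fun _ => α := by
    have hae0 : ∀ᵐ x : (Fin d → ℝ), Lc x ≠ 0 := by
      rw [ae_iff]
      simpa using hker
    filter_upwards [hae0] with x hx
    rcases lt_or_gt_of_ne hx with h | h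
    · rw [hFneg x h]; exact hα.le
    · rw [hFpos x h]
  -- conclude
  have hrfl : sobSemi d g = essSup F volume := rfl
  rw [hrfl]
  have hfreq : ∃ᶠ x in ae (volume : Measure (Fin d → ℝ)), α ≤ F x := by
    rw [Filter.Frequently]
    intro hnot
    rw [ae_iff] at hnot
    have hsub : {y : Fin d → ℝ | 0 < Lc y} ⊆ {x | ¬¬α ≤ F x} := by
      intro y hy
      simp only [Set.mem_setOf_eq, not_not]
      exact le_of_eq (hFpos y hy).symm
    have hpos : 0 < volume {y : Fin d → ℝ | 0 < Lc y} := by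
      refine hopen.measure_pos volume ⟨v, ?_⟩
      simp only [Set.mem_setOf_eq, hLcapp]
      rcases Function.ne_iff.mp hv with ⟨l0, hl0⟩
      have h2 : (0:ℝ) < ∑ l, v l ^ 2 :=
        Finset.sum_pos' (fun l _ => sq_nonneg _)
          ⟨l0, Finset.mem_univ _, lt_of_le_of_ne (sq_nonneg _) (Ne.symm (pow_ne_zero 2 hl0))⟩
      simpa [sq] using h2
    exact absurd (measure_mono_null hsub hnot) (ne_of_gt hpos)
  haveI : (ae (volume : Measure (Fin d → ℝ))).NeBot := by
    rw [ae_neBot]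
    intro h0
    exact absurd (h0 ▸ measure_empty (μ := (0 : Measure (Fin d → ℝ))))
      (by simpa [h0] using (NeZero.ne (volume (Set.univ : Set (Fin d → ℝ)))))
  apply le_antisymm
  · refine Filter.limsup_le_of_le
      (Filter.isCoboundedUnder_le_of_le _ (x := 0) (f := F) fun y => ?_) hae
    exact le_ciSup_of_le ((Set.finite_range _).bddAbove) ⟨0, hd⟩ (abs_nonneg _)
  · exact Filter.le_limsup_of_frequently_le hfreq
      (Filter.isBoundedUnder_of_eventually_le (a := α) hae)


lemma sum_sub_sq (d : ℕ) (w u : Fin d → ℝ) (μ : ℝ) :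
    (∑ l, (w l - μ * u l) ^ 2)
      = (∑ l, w l ^ 2) - 2 * μ * (∑ l, u l * w l) + μ ^ 2 * (∑ l, u l ^ 2) := by
  rw [Finset.mul_sum, Finset.mul_sum, ← Finset.sum_sub_distrib, ← Finset.sum_add_distrib]
  exact Finset.sum_congr rfl fun l _ => by ring

lemma key_quad (A V Q μ : ℝ) (hV : 0 < V) :
    (A * V - Q ^ 2) / V ≤ A - 2 * μ * Q + μ ^ 2 * V := by
  rw [div_le_iff₀ hV]
  nlinarith [sq_nonneg (Q - μ * V)]

set_option maxHeartbeats 2000000 in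
/-- Failure of inverse stability due to opposite weight vectors: `Γ` with rows
`a_1,…,a_m,−a_1,…,−a_m` and output weights `(1,…,1,−1,…,−1)` realizes `0`;
every parametrization of `g_k = (1/k)ReLU(⟨v,·⟩)` stays at distance `≥ C`
from `Γ`, with `C² = (1/d²)·min_i (‖a_i‖₂²‖v‖₂² − ⟨a_i,v⟩²)`. -/
theorem stmt_8 (d m : ℕ) (hd : 0 < d) (hm : 0 < m)
    (a : Fin m → Fin d → ℝ) (v : Fin d → ℝ)
    (hnorm : ∀ i, ‖a i‖ = 1) (hvnorm : ‖v‖ = 1)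
    (hpair : ∀ i j, i ≠ j → ∀ μ : ℝ, a i ≠ μ • a j)
    (hsum : ∑ i, a i = 0)
    (hv : ∀ i, ∀ μ : ℝ, v ≠ μ • a i) :
    ∃ C : ℝ, 0 < C ∧
      C ^ 2 = (1 / (d : ℝ) ^ 2) *
        (Finset.univ.inf' (Finset.univ_nonempty_iff.mpr ⟨⟨0, hm⟩⟩) fun i =>
          (∑ l, (a i l) ^ 2) * (∑ l, (v l) ^ 2) - (∑ l, a i l * v l) ^ 2) ∧
      ∀ k : ℕ, 1 ≤ k →
        ∀ (b : Fin m ⊕ Fin m → Fin d → ℝ) (cc : Fin m ⊕ Fin m → ℝ),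
          (∀ x : Fin d → ℝ,
            ∑ i, cc i * max (∑ l, b i l * x l) 0 =
              (1 / (k : ℝ)) * max (∑ l, v l * x l) 0) →
          sobSemi d (fun x =>
              (1 / (k : ℝ)) * max (∑ l, v l * x l) 0 -
                ∑ i : Fin m ⊕ Fin m,
                  Sum.elim (fun _ => (1 : ℝ)) (fun _ => -1) i *
                    max (∑ l, Sum.elim a (fun i' => -(a i')) i l * x l) 0) = 1 / k ∧
          max (⨆ i, ⨆ l, |b i l - Sum.elim a (fun i' => -(a i')) i l|)
              (⨆ i, |cc i - Sum.elim (fun _ => (1 : ℝ)) (fun _ => -1) i|) ≥ C := by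
  classical
  haveI : Nonempty (Fin m ⊕ Fin m) := ⟨Sum.inl ⟨0, hm⟩⟩
  have hdR : (0:ℝ) < d := Nat.cast_pos.mpr hd
  have hvne : v ≠ 0 := by
    intro h; rw [h, norm_zero] at hvnorm; norm_num at hvnorm
  set r : Fin m ⊕ Fin m → Fin d → ℝ := Sum.elim a (fun i' => -(a i')) with hr
  set M : ℝ := Finset.univ.inf' (Finset.univ_nonempty_iff.mpr ⟨⟨0, hm⟩⟩) (fun i =>
      (∑ l, (a i l) ^ 2) * (∑ l, (v l) ^ 2) - (∑ l, a i l * v l) ^ 2) with hM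
  have hV : (0:ℝ) < ∑ l, (v l)^2 := by
    simpa [sq] using sum_pos_self d v hvne
  have hMpos : 0 < M := by
    rw [hM, Finset.lt_inf'_iff]
    intro i _
    have hcs := Finset.sum_mul_sq_le_sq_mul_sq Finset.univ (a i) v
    rcases lt_or_eq_of_le hcs with h | h
    · linarith
    · exfalso
      have hane : a i ≠ 0 := by
        intro h0; have := hnorm i; rw [h0, norm_zero] at this; norm_num at this
      have hA : (0:ℝ) < ∑ l, (a i l)^2 := by
        simpa [sq] using sum_pos_self d (a i) hane
      set μ : ℝ := (∑ l, a i l * v l) / (∑ l, (a i l)^2) with hμ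
      have hzero : (∑ l, (v l - μ * a i l)^2) = 0 := by
        rw [sum_sub_sq]
        rw [hμ]
        field_simp
        nlinarith [h]
      have hveq : v = μ • a i := by
        funext l
        have hterm := (Finset.sum_eq_zero_iff_of_nonneg
          (fun l _ => sq_nonneg ((v l - μ * a i l)))).mp hzero l (Finset.mem_univ l)
        have : v l - μ * a i l = 0 := by
          have := sq_eq_zero_iff.mp hterm
          exact this
        simp only [Pi.smul_apply, smul_eq_mul]
        linarith
      exact hv i μ hveq
  set C : ℝ := Real.sqrt ((1 / (d:ℝ)^2) * M) with hC
  have hargpos : (0:ℝ) < (1 / (d:ℝ)^2) * M := by positivity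
  refine ⟨C, Real.sqrt_pos.mpr hargpos, Real.sq_sqrt hargpos.le, ?_⟩
  intro k hk b cc hreal
  have hk0 : (0:ℝ) < k := Nat.cast_pos.mpr (lt_of_lt_of_le one_pos hk)
  have hα : (0:ℝ) < 1 / k := by positivity
  constructor
  · -- Sobolev seminorm computation
    have hfun : (fun x : Fin d → ℝ =>
        (1 / (k : ℝ)) * max (∑ l, v l * x l) 0 -
          ∑ i : Fin m ⊕ Fin m,
            Sum.elim (fun _ => (1 : ℝ)) (fun _ => -1) i *
              max (∑ l, r i l * x l) 0)
        = fun x : Fin d → ℝ => (1 / (k : ℝ)) * max (∑ l, v l * x l) 0 := by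
      funext x
      have hzero : (∑ i : Fin m ⊕ Fin m,
          Sum.elim (fun _ => (1 : ℝ)) (fun _ => -1) i *
            max (∑ l, r i l * x l) 0) = 0 := by
        rw [Fintype.sum_sum_type]
        simp only [hr, Sum.elim_inl, Sum.elim_inr, one_mul, Pi.neg_apply, neg_mul]
        rw [← Finset.sum_add_distrib]
        have hsimp : ∀ i : Fin m,
            max (∑ l, a i l * x l) 0 + -(max (∑ l, -(a i l * x l)) 0)
              = ∑ l, a i l * x l := by
          intro i
          rw [show (∑ l, -(a i l * x l)) = -(∑ l, a i l * x l) by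
            rw [← Finset.sum_neg_distrib]]
          rcases le_total (∑ l, a i l * x l) 0 with h | h
          · rw [max_eq_right h, max_eq_left (by linarith)]; ring
          · rw [max_eq_left h, max_eq_right (by linarith)]; ring
        rw [Finset.sum_congr rfl (fun i _ => hsimp i)]
        rw [Finset.sum_comm]
        have : ∀ l : Fin d, (∑ i, a i l * x l) = 0 := by
          intro l
          rw [← Finset.sum_mul]
          have := congrFun hsum l
          rw [Finset.sum_apply, Pi.zero_apply] at this
          rw [this, zero_mul]
        exact Finset.sum_eq_zero fun l _ => this l
      rw [hzero, sub_zero]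
    rw [hfun]
    exact sobSemi_relu d hd v hvnorm _ hα
  · -- distance lower bound
    obtain ⟨i₀, μ, hb⟩ := exists_row_parallel d v hvne b cc (1 / (k:ℝ))
      (ne_of_gt hα) hreal
    set S : ℝ := ⨆ l, |b i₀ l - r i₀ l| with hS
    have hbddS : BddAbove (Set.range fun l => |b i₀ l - r i₀ l|) :=
      (Set.finite_range _).bddAbove
    have hS0 : 0 ≤ S := le_ciSup_of_le hbddS ⟨0, hd⟩ (abs_nonneg _)
    have hdS : (∑ l, (b i₀ l - r i₀ l)^2) ≤ d * S^2 := by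
      calc (∑ l, (b i₀ l - r i₀ l)^2) ≤ Finset.univ.card • S^2 := by
            apply Finset.sum_le_card_nsmul
            intro l _
            have h1 : |b i₀ l - r i₀ l| ≤ S := le_ciSup hbddS l
            calc (b i₀ l - r i₀ l)^2 = |b i₀ l - r i₀ l|^2 := (sq_abs _).symm
              _ ≤ S^2 := pow_le_pow_left₀ (abs_nonneg _) h1 2
        _ = d * S^2 := by simp [Finset.card_univ, nsmul_eq_mul]
    have hVd : (∑ l, (v l)^2) ≤ (d:ℝ) := by
      calc (∑ l, (v l)^2) ≤ Finset.univ.card • (1:ℝ) := by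
            apply Finset.sum_le_card_nsmul
            intro l _
            have h1 : |v l| ≤ 1 := by
              have := norm_le_pi_norm v l
              rwa [hvnorm] at this
            calc (v l)^2 = |v l|^2 := (sq_abs _).symm
              _ ≤ 1 := by nlinarith [abs_nonneg (v l)]
        _ = (d:ℝ) := by simp [Finset.card_univ]
    have hMle : M / (d:ℝ) ≤ ∑ l, (b i₀ l - r i₀ l)^2 := by
      have hMV : M / (d:ℝ) ≤ M / (∑ l, (v l)^2) :=
        div_le_div_of_nonneg_left hMpos.le hV hVd
      cases i₀ with
      | inl j =>
        have hexp : (∑ l, (b (Sum.inl j) l - r (Sum.inl j) l)^2)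
            = ∑ l, (a j l - μ * v l)^2 := by
          apply Finset.sum_congr rfl
          intro l _
          rw [hb]
          simp only [hr, Sum.elim_inl, Pi.smul_apply, smul_eq_mul]
          ring
        rw [hexp, sum_sub_sq]
        have hQ : (∑ l, v l * a j l) = ∑ l, a j l * v l :=
          Finset.sum_congr rfl fun l _ => mul_comm _ _
        have hinf : M ≤ (∑ l, (a j l)^2) * (∑ l, (v l)^2) - (∑ l, a j l * v l)^2 := by
          rw [hM]; exact Finset.inf'_le _ (Finset.mem_univ j)
        calc M / (d:ℝ) ≤ M / (∑ l, (v l)^2) := hMV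
          _ ≤ ((∑ l, (a j l)^2) * (∑ l, (v l)^2) - (∑ l, v l * a j l)^2)
                / (∑ l, (v l)^2) := by
              apply (div_le_div_iff_of_pos_right hV).mpr
              rw [hQ]
              exact hinf
          _ ≤ _ := key_quad _ _ _ μ hV
      | inr j =>
        have hexp : (∑ l, (b (Sum.inr j) l - r (Sum.inr j) l)^2)
            = ∑ l, (a j l - (-μ) * v l)^2 := by
          apply Finset.sum_congr rfl
          intro l _
          rw [hb]
          simp only [hr, Sum.elim_inr, Pi.smul_apply, smul_eq_mul, Pi.neg_apply]
          ring
        rw [hexp, sum_sub_sq]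
        have hQ : (∑ l, v l * a j l) = ∑ l, a j l * v l :=
          Finset.sum_congr rfl fun l _ => mul_comm _ _
        have hinf : M ≤ (∑ l, (a j l)^2) * (∑ l, (v l)^2) - (∑ l, a j l * v l)^2 := by
          rw [hM]; exact Finset.inf'_le _ (Finset.mem_univ j)
        calc M / (d:ℝ) ≤ M / (∑ l, (v l)^2) := hMV
          _ ≤ ((∑ l, (a j l)^2) * (∑ l, (v l)^2) - (∑ l, v l * a j l)^2)
                / (∑ l, (v l)^2) := by
              apply (div_le_div_iff_of_pos_right hV).mpr
              rw [hQ]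
              exact hinf
          _ ≤ _ := key_quad _ _ _ (-μ) hV
    have hS2 : (1 / (d:ℝ)^2) * M ≤ S^2 := by
      have h1 : M / (d:ℝ) ≤ (d:ℝ) * S^2 := le_trans hMle hdS
      rw [div_le_iff₀ hdR] at h1
      have h2 : (1/(d:ℝ)^2) * M ≤ (1/(d:ℝ)^2) * ((d:ℝ)*S^2*(d:ℝ)) :=
        mul_le_mul_of_nonneg_left h1 (by positivity)
      calc (1 / (d:ℝ)^2) * M ≤ (1/(d:ℝ)^2) * ((d:ℝ)*S^2*(d:ℝ)) := h2
        _ = S^2 := by field_simp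
    have hCS : C ≤ S := by
      have h3 := Real.sqrt_le_sqrt hS2
      rwa [Real.sqrt_sq hS0] at h3
    have hX : S ≤ ⨆ i, ⨆ l, |b i l - r i l| :=
      le_ciSup (f := fun i => ⨆ l, |b i l - r i l|) ((Set.finite_range _).bddAbove) i₀
    exact le_trans hCS (le_trans hX (le_max_left _ _))
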